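/- For all positive integers k and m, every finite simple graph G has a set S ⊆ V(G) with |S| ≤ (k-1)·m such that, letting C₁, …, C_t be the connected components of the induced subgraph of G on V(G)\S, at least one of the following holds: (a) t ≥ m; (b) for each i ∈ {1, …, t}, the induced subgraph on Cᵢ is either k-connected or complete. -/

import Mathlib

open SimpleGraph Set Function

section Helpers
variable {V : Type*} {G : SimpleGraph V}

/-- Iso between nested induced subgraphs and a single induced subgraph. -/
noncomputable def induceInduceIso (G : SimpleGraph V) (A : Set V) (B : Set ↥A) :
    (G.induce A).induce B ≃g G.induce (Subtype.val '' B) where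
  toEquiv := Equiv.Set.image Subtype.val B Subtype.val_injective
  map_rel_iff' := Iff.rfl

lemma induceInduceIso_apply (G : SimpleGraph V) (A : Set V) (B : Set ↥A) (x : ↥B) :
    ((induceInduceIso G A B x : ↥(Subtype.val '' B)) : V) = ((x : ↥A) : V) := rfl

/-- cards under surjective non-injective maps. -/
lemma card_lt_of_surj_not_inj {α β : Type*} [Finite α] [Finite β] (f : α → β)
    (hs : Function.Surjective f) (hi : ¬ Function.Injective f) :
    Nat.card β < Nat.card α := by
  classical
  haveI := Fintype.ofFinite α
  haveI := Fintype.ofFinite β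
  simpa [Nat.card_eq_fintype_card] using
    Fintype.card_lt_of_surjective_not_injective f hs hi

/-- Confinement: if `D ⊆ A` is "closed" under adjacency into `A`, then a walk
in `G.induce A` between vertices of `D` stays in `D`. -/
lemma reachable_induce_of_closed {A D : Set V}
    (hcl : ∀ u v : V, u ∈ D → v ∈ A → G.Adj u v → v ∈ D) :
    ∀ (a b : ↥A) (_ : (G.induce A).Walk a b) (ha : (a : V) ∈ D) (hb : (b : V) ∈ D),
      (G.induce D).Reachable ⟨a, ha⟩ ⟨b, hb⟩ := by
  intro a b p
  induction p with
  | nil => intro ha hb; rfl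
  | @cons x y z h p ih =>
      intro ha hb
      have hyD : (y : V) ∈ D := hcl x y ha y.2 h
      exact (SimpleGraph.Reachable.trans ⟨SimpleGraph.Walk.cons (by exact h) SimpleGraph.Walk.nil⟩
        (ih hyD hb))

/-- In an induced graph on a two-element set with the two points non-adjacent,
the two points are not reachable from each other. -/
lemma not_reachable_pair {W : Type*} (H : SimpleGraph W) {x y : W} (hxy : x ≠ y)
    (hna : ¬ H.Adj x y) :
    ¬ (H.induce {x, y}).Reachable ⟨x, by simp⟩ ⟨y, by simp⟩ := by
  have hadj : ∀ a b : ↥({x, y} : Set W), ¬ (H.induce {x, y}).Adj a b := by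
    rintro ⟨a, ha⟩ ⟨b, hb⟩ hab
    have hab' : H.Adj a b := hab
    rcases ha with rfl | rfl <;> rcases hb with rfl | rfl
    · exact H.loopless.irrefl _ hab'
    · exact hna hab'
    · exact hna hab'.symm
    · exact H.loopless.irrefl _ hab'
  intro hr
  rw [SimpleGraph.reachable_iff_reflTransGen] at hr
  rcases hr.cases_head with h | ⟨c, hc, -⟩
  · exact hxy (by simpa using congrArg Subtype.val h)
  · exact hadj _ _ hc

end Helpers

/-- A graph is `k`-connected if it remains connected after the removal of any fewer
than `k` vertices. -/
def KConnected {V : Type*} (k : ℕ) (G : SimpleGraph V) : Prop :=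
  ∀ S : Set V, S.ncard < k → (G.induce (Sᶜ)).Connected

section Step
variable {V : Type*} [Fintype V]

lemma step_lemma (G : SimpleGraph V) (k : ℕ) (S : Set V)
    (c : (G.induce Sᶜ).ConnectedComponent)
    (hkc : ¬ KConnected k ((G.induce Sᶜ).induce c.supp))
    (hcomp : ¬ ∀ x y : c.supp, (x : ↥(Sᶜ)) ≠ y → (G.induce Sᶜ).Adj x y) :
    ∃ T : Set V, T.ncard ≤ k - 1 ∧
      Nat.card (G.induce Sᶜ).ConnectedComponent <
        Nat.card (G.induce ((S ∪ T)ᶜ)).ConnectedComponent := by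
  classical
  set H := (G.induce Sᶜ).induce c.supp with hH
  push_neg at hcomp
  obtain ⟨x0, y0, hxy0, hna0⟩ := hcomp
  unfold KConnected at hkc
  push_neg at hkc
  obtain ⟨T1, hT1k, hT1c⟩ := hkc
  -- unified extraction
  have key : ∃ T : Set ↥c.supp, T.ncard < k ∧ ∃ a b : ↥(Tᶜ), a ≠ b ∧
      ¬ (H.induce (Tᶜ)).Reachable a b := by
    rw [SimpleGraph.connected_iff, not_and_or] at hT1c
    rcases hT1c with hpre | hemp
    · refine ⟨T1, hT1k, ?_⟩
      unfold SimpleGraph.Preconnected at hpre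
      push_neg at hpre
      obtain ⟨a, b, hab⟩ := hpre
      exact ⟨a, b, fun h => hab (h ▸ SimpleGraph.Reachable.refl a), hab⟩
    · -- leftover empty: component has < k vertices; use the non-adjacent pair
      have hTc : T1ᶜ = (∅ : Set ↥c.supp) := by
        rw [← Set.not_nonempty_iff_eq_empty]
        intro ⟨z, hz⟩
        exact hemp ⟨⟨z, hz⟩⟩
      have hT1univ : T1 = Set.univ := by
        rw [← compl_compl T1, hTc, Set.compl_empty]
      have hxy0' : x0 ≠ y0 := fun h => hxy0 (congrArg Subtype.val h)
      refine ⟨{x0, y0}ᶜ, lt_of_le_of_lt ?_ hT1k, ?_⟩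
      · rw [hT1univ]
        exact Set.ncard_le_ncard (Set.subset_univ _) (Set.toFinite _)
      · rw [compl_compl]
        refine ⟨⟨x0, by simp⟩, ⟨y0, by simp⟩, ?_, ?_⟩
        · intro h
          exact hxy0' (congrArg Subtype.val h)
        · exact not_reachable_pair H hxy0' (fun h => hna0 h)
  obtain ⟨T, hTk, a, b, hab, hnr⟩ := key
  -- push everything down to `V`
  set T₀ : Set V := Subtype.val '' (Subtype.val '' T) with hT₀
  set D : Set V := Subtype.val '' (Subtype.val '' (Tᶜ)) with hD
  have hvalval : ∀ p q : ↥c.supp, ((p : ↥(Sᶜ)) : V) = ((q : ↥(Sᶜ)) : V) → p = q := by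
    intro p q h
    exact Subtype.ext (Subtype.ext h)
  have hmemT₀ : ∀ v : V, v ∈ T₀ ↔ ∃ t : ↥c.supp, t ∈ T ∧ ((t : ↥(Sᶜ)) : V) = v := by
    intro v
    constructor
    · rintro ⟨w, ⟨t, ht, rfl⟩, rfl⟩
      exact ⟨t, ht, rfl⟩
    · rintro ⟨t, ht, rfl⟩
      exact ⟨t, ⟨t, ht, rfl⟩, rfl⟩
  have hmemD : ∀ v : V, v ∈ D ↔ ∃ t : ↥c.supp, t ∉ T ∧ ((t : ↥(Sᶜ)) : V) = v := by
    intro v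
    constructor
    · rintro ⟨w, ⟨t, ht, rfl⟩, rfl⟩
      exact ⟨t, ht, rfl⟩
    · rintro ⟨t, ht, rfl⟩
      exact ⟨t, ⟨t, ht, rfl⟩, rfl⟩
  have hT₀card : T₀.ncard = T.ncard := by
    rw [hT₀, Set.ncard_image_of_injective _ Subtype.val_injective,
      Set.ncard_image_of_injective _ Subtype.val_injective]
  have hDsub : D ⊆ (S ∪ T₀)ᶜ := by
    intro v hv
    rw [hmemD] at hv
    obtain ⟨t, htT, rfl⟩ := hv
    rw [Set.compl_union]
    refine ⟨(t : ↥(Sᶜ)).2, fun hv' => ?_⟩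
    rw [hmemT₀] at hv'
    obtain ⟨t', ht', hval⟩ := hv'
    exact htT ((hvalval t' t hval) ▸ ht')
  have hcl : ∀ u v : V, u ∈ D → v ∈ (S ∪ T₀)ᶜ → G.Adj u v → v ∈ D := by
    intro u v hu hv hadj
    rw [hmemD] at hu
    obtain ⟨t, htT, rfl⟩ := hu
    rw [Set.compl_union] at hv
    obtain ⟨hvS, hvT₀⟩ := hv
    have hadj' : (G.induce Sᶜ).Adj (t : ↥(Sᶜ)) ⟨v, hvS⟩ := hadj
    have hvc : (⟨v, hvS⟩ : ↥(Sᶜ)) ∈ c.supp := by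
      rw [SimpleGraph.ConnectedComponent.mem_supp_iff]
      have ht' : (t : ↥(Sᶜ)) ∈ c.supp := t.2
      rw [SimpleGraph.ConnectedComponent.mem_supp_iff] at ht'
      rw [← ht']
      exact SimpleGraph.ConnectedComponent.eq.mpr hadj'.symm.reachable
    rw [hmemD]
    refine ⟨⟨⟨v, hvS⟩, hvc⟩, fun hT' => ?_, rfl⟩
    exact hvT₀ ((hmemT₀ v).mpr ⟨⟨⟨v, hvS⟩, hvc⟩, hT', rfl⟩)
  -- the iso to `G.induce D`
  have hnrD : ¬ (G.induce D).Reachable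
      ⟨((a : ↥c.supp) : ↥(Sᶜ)), (hmemD _).mpr ⟨a, a.2, rfl⟩⟩
      ⟨((b : ↥c.supp) : ↥(Sᶜ)), (hmemD _).mpr ⟨b, b.2, rfl⟩⟩ := by
    intro hr
    apply hnr
    let ψ1 := induceInduceIso (G.induce Sᶜ) c.supp (Tᶜ)
    let ψ2 := induceInduceIso G (Sᶜ) (Subtype.val '' (Tᶜ))
    let φ := ψ1.trans ψ2
    have hφa : φ a = ⟨((a : ↥c.supp) : ↥(Sᶜ)), (hmemD _).mpr ⟨a, a.2, rfl⟩⟩ :=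
      Subtype.ext rfl
    have hφb : φ b = ⟨((b : ↥c.supp) : ↥(Sᶜ)), (hmemD _).mpr ⟨b, b.2, rfl⟩⟩ :=
      Subtype.ext rfl
    exact (SimpleGraph.Iso.reachable_iff (φ := φ) (u := a) (v := b)).mp
      (by rw [hφa, hφb]; exact hr)
  -- the component map
  have hle : (S ∪ T₀)ᶜ ≤ Sᶜ := Set.compl_subset_compl.mpr Set.subset_union_left
  set f : (G.induce ((S ∪ T₀)ᶜ)).ConnectedComponent → (G.induce Sᶜ).ConnectedComponent :=
    SimpleGraph.ConnectedComponent.map (G.induceHomOfLE hle).toHom with hf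
  have hfmk : ∀ (v : V) (hv : v ∈ (S ∪ T₀)ᶜ),
      f ((G.induce ((S ∪ T₀)ᶜ)).connectedComponentMk ⟨v, hv⟩) =
        (G.induce Sᶜ).connectedComponentMk ⟨v, hle hv⟩ := by
    intro v hv
    rfl
  have hsurj : Function.Surjective f := by
    intro d
    obtain ⟨w, rfl⟩ := d.exists_rep
    by_cases hw : (w : V) ∈ T₀
    · -- w is in the component c; use a instead
      rw [hmemT₀] at hw
      obtain ⟨t, htT, hval⟩ := hw
      have hwc : w ∈ c.supp := by
        have : (t : ↥(Sᶜ)) = w := Subtype.ext hval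
        rw [← this]
        exact t.2
      have haD : ((((a : ↥c.supp) : ↥(Sᶜ)) : V)) ∈ D := (hmemD _).mpr ⟨a, a.2, rfl⟩
      refine ⟨(G.induce ((S ∪ T₀)ᶜ)).connectedComponentMk
        ⟨(((a : ↥c.supp) : ↥(Sᶜ)) : V), hDsub haD⟩, ?_⟩
      rw [hfmk]
      have h1 : (⟨(((a : ↥c.supp) : ↥(Sᶜ)) : V), hle (hDsub haD)⟩ : ↥(Sᶜ)) =
          ((a : ↥c.supp) : ↥(Sᶜ)) := Subtype.ext rfl
      rw [h1]
      have h2 : ((a : ↥c.supp) : ↥(Sᶜ)) ∈ c.supp := (a : ↥c.supp).2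
      rw [SimpleGraph.ConnectedComponent.mem_supp_iff] at h2
      rw [h2]
      have h3 : w ∈ c.supp := hwc
      rw [SimpleGraph.ConnectedComponent.mem_supp_iff] at h3
      exact h3.symm
    · have hw' : (w : V) ∈ (S ∪ T₀)ᶜ := by
        rw [Set.compl_union]
        exact ⟨w.2, hw⟩
      refine ⟨(G.induce ((S ∪ T₀)ᶜ)).connectedComponentMk ⟨(w : V), hw'⟩, ?_⟩
      rw [hfmk]
      congr 1
  have hninj : ¬ Function.Injective f := by
    intro hinj
    have haD : ((((a : ↥c.supp) : ↥(Sᶜ)) : V)) ∈ D := (hmemD _).mpr ⟨a, a.2, rfl⟩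
    have hbD : ((((b : ↥c.supp) : ↥(Sᶜ)) : V)) ∈ D := (hmemD _).mpr ⟨b, b.2, rfl⟩
    set a' : ↥((S ∪ T₀)ᶜ) := ⟨_, hDsub haD⟩ with ha'
    set b' : ↥((S ∪ T₀)ᶜ) := ⟨_, hDsub hbD⟩ with hb'
    have hfab : f ((G.induce ((S ∪ T₀)ᶜ)).connectedComponentMk a') =
        f ((G.induce ((S ∪ T₀)ᶜ)).connectedComponentMk b') := by
      rw [hfmk, hfmk]
      have h2 : ((a : ↥c.supp) : ↥(Sᶜ)) ∈ c.supp := (a : ↥c.supp).2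
      have h3 : ((b : ↥c.supp) : ↥(Sᶜ)) ∈ c.supp := (b : ↥c.supp).2
      rw [SimpleGraph.ConnectedComponent.mem_supp_iff] at h2 h3
      have e2 : (⟨_, hle (hDsub haD)⟩ : ↥(Sᶜ)) = ((a : ↥c.supp) : ↥(Sᶜ)) := Subtype.ext rfl
      have e3 : (⟨_, hle (hDsub hbD)⟩ : ↥(Sᶜ)) = ((b : ↥c.supp) : ↥(Sᶜ)) := Subtype.ext rfl
      rw [e2, e3, h2, h3]
    have := hinj hfab
    rw [SimpleGraph.ConnectedComponent.eq] at this
    obtain ⟨p⟩ := this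
    exact hnrD (reachable_induce_of_closed hcl a' b' p haD hbD)
  refine ⟨T₀, ?_, ?_⟩
  · rw [hT₀card]
    omega
  · exact card_lt_of_surj_not_inj f hsurj hninj

end Step

/-- For all positive integers `k` and `m`, every finite simple graph `G` has a set
`S ⊆ V(G)` with `|S| ≤ (k-1)·m` such that, for the connected components of the induced
subgraph on `V(G) \ S`, either (a) there are at least `m` of them, or (b) each of them
induces a subgraph which is `k`-connected or complete. -/
theorem statement10 {V : Type*} [Fintype V] (k m : ℕ) (hk : 1 ≤ k) (hm : 1 ≤ m)
    (G : SimpleGraph V) :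
    ∃ S : Set V, S.ncard ≤ (k - 1) * m ∧
      (m ≤ Nat.card (G.induce (Sᶜ)).ConnectedComponent ∨
        ∀ comp : (G.induce (Sᶜ)).ConnectedComponent,
          KConnected k ((G.induce (Sᶜ)).induce comp.supp) ∨
          ∀ x y : comp.supp, (x : ↥(Sᶜ)) ≠ y → (G.induce (Sᶜ)).Adj x y) := by
  classical
  suffices h : ∀ j : ℕ, ∃ S : Set V, S.ncard ≤ (k - 1) * j ∧
      (j ≤ Nat.card (G.induce (Sᶜ)).ConnectedComponent ∨
        ∀ comp : (G.induce (Sᶜ)).ConnectedComponent,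
          KConnected k ((G.induce (Sᶜ)).induce comp.supp) ∨
          ∀ x y : comp.supp, (x : ↥(Sᶜ)) ≠ y → (G.induce (Sᶜ)).Adj x y) from h m
  intro j
  induction j with
  | zero => exact ⟨∅, by simp, Or.inl (Nat.zero_le _)⟩
  | succ n ih =>
      obtain ⟨S, hScard, hS⟩ := ih
      by_cases hall : ∀ comp : (G.induce (Sᶜ)).ConnectedComponent,
          KConnected k ((G.induce (Sᶜ)).induce comp.supp) ∨
          ∀ x y : comp.supp, (x : ↥(Sᶜ)) ≠ y → (G.induce (Sᶜ)).Adj x y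
      · refine ⟨S, le_trans hScard ?_, Or.inr hall⟩
        exact Nat.mul_le_mul_left _ (Nat.le_succ n)
      · rw [not_forall] at hall
        obtain ⟨c, hc⟩ := hall
        rw [not_or] at hc
        obtain ⟨hkc, hcomp⟩ := hc
        have hn : n ≤ Nat.card (G.induce (Sᶜ)).ConnectedComponent :=
          hS.resolve_right (fun h => (h c).elim hkc hcomp)
        obtain ⟨T, hTcard, hlt⟩ := step_lemma G k S c hkc hcomp
        refine ⟨S ∪ T, ?_, Or.inl ?_⟩
        · calc (S ∪ T).ncard ≤ S.ncard + T.ncard := Set.ncard_union_le S T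
            _ ≤ (k - 1) * n + (k - 1) := Nat.add_le_add hScard hTcard
            _ = (k - 1) * (n + 1) := by ring
        · omega
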